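/- Let R = k[x_1, x_2] and F = X_1^{a_1}X_2^{a_2}(c_1 X_1^{b_1} − c_2 X_2^{b_2}) with b_1, b_2 ≥ 1, c_1, c_2 ≠ 0, and v_1 = v_2 =: v where v_j = min{i ≥ 1 : a_j + 1 ≤ i b_j}. Then Ann_R(F) = (p, q) where p = Σ_{i=0}^{v} c_1^{v−i} c_2^i x_1^{i b_1} x_2^{(v−i) b_2} and q = Σ_{i=0}^{v−1} c_1^{v−1−i} c_2^i x_1^{a_1+1−(v−1−i)b_1} x_2^{a_2+1−i b_2}. -/

import Mathlib

open scoped Classical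
open MvPolynomial Finset

/-- The contraction action of `k[x_1,...,x_N]` on `k[X_1,...,X_N]`. -/
noncomputable def contract {k : Type*} [CommRing k] {σ : Type*}
    (f F : MvPolynomial σ k) : MvPolynomial σ k :=
  ∑ a ∈ f.support, ∑ b ∈ F.support,
    if a ≤ b then MvPolynomial.monomial (b - a) (MvPolynomial.coeff a f * MvPolynomial.coeff b F)
    else 0

/-- `Ann_R(F) = {f ∈ R : f ∘ F = 0}` as a set. -/
noncomputable def annSet {k : Type*} [CommRing k] {σ : Type*}
    (F : MvPolynomial σ k) : Set (MvPolynomial σ k) :=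
  {f | contract f F = 0}

/-- `p = Σ_{i=0}^{v} c_1^{v-i} c_2^i x_1^{i b_1} x_2^{(v-i) b_2}`. -/
noncomputable def pPoly (k : Type*) [Field k] (b1 b2 v : ℕ) (c1 c2 : k) :
    MvPolynomial (Fin 2) k :=
  ∑ i ∈ Finset.range (v + 1),
    MvPolynomial.C (c1 ^ (v - i) * c2 ^ i) * MvPolynomial.X 0 ^ (i * b1) *
      MvPolynomial.X 1 ^ ((v - i) * b2)

/-- `q = Σ_{i=0}^{v-1} c_1^{v-1-i} c_2^i x_1^{a_1+1-(v-1-i)b_1} x_2^{a_2+1-i b_2}`. -/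
noncomputable def qPoly (k : Type*) [Field k] (a1 a2 b1 b2 v : ℕ) (c1 c2 : k) :
    MvPolynomial (Fin 2) k :=
  ∑ i ∈ Finset.range v,
    MvPolynomial.C (c1 ^ (v - 1 - i) * c2 ^ i) * MvPolynomial.X 0 ^ (a1 + 1 - (v - 1 - i) * b1) *
      MvPolynomial.X 1 ^ (a2 + 1 - i * b2)

namespace Stmt12Aux

variable {k : Type*} [Field k]

/-- exponent vector `(m, n)` -/
noncomputable def e (m n : ℕ) : Fin 2 →₀ ℕ := Finsupp.single 0 m + Finsupp.single 1 n

@[simp] lemma e_apply0 (m n : ℕ) : e m n 0 = m := by simp [e]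
@[simp] lemma e_apply1 (m n : ℕ) : e m n 1 = n := by simp [e]

lemma eta (β : Fin 2 →₀ ℕ) : β = e (β 0) (β 1) := by
  ext i
  fin_cases i <;> simp

lemma e_le_e {m n m' n' : ℕ} : e m n ≤ e m' n' ↔ m ≤ m' ∧ n ≤ n' := by
  constructor
  · intro h
    exact ⟨by simpa using h 0, by simpa using h 1⟩
  · intro ⟨h1, h2⟩ i
    fin_cases i <;> simpa

lemma e_inj {m n m' n' : ℕ} : e m n = e m' n' ↔ m = m' ∧ n = n' := by
  constructor
  · intro h
    constructor
    · have := congrArg (fun f => f 0) h; simpa using this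
    · have := congrArg (fun f => f 1) h; simpa using this
  · rintro ⟨rfl, rfl⟩; rfl

lemma e_sub (m n m' n' : ℕ) : e m n - e m' n' = e (m - m') (n - n') := by
  ext i
  fin_cases i <;> simp [Finsupp.tsub_apply]

lemma e_add (m n m' n' : ℕ) : e m n + e m' n' = e (m + m') (n + n') := by
  ext i
  fin_cases i <;> simp

lemma mono_eq (c : k) (m n : ℕ) :
    C c * X 0 ^ m * X 1 ^ n = (monomial (e m n) c : MvPolynomial (Fin 2) k) := by
  rw [X_pow_eq_monomial, X_pow_eq_monomial, mul_assoc, monomial_mul, C_mul_monomial, e]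
  ring_nf




lemma contract_superset (f F : MvPolynomial σ k) (s : Finset (σ →₀ ℕ)) (hs : F.support ⊆ s) :
    contract f F = ∑ a ∈ f.support, ∑ b ∈ s,
      if a ≤ b then monomial (b - a) (coeff a f * coeff b F) else 0 := by
  unfold contract
  refine Finset.sum_congr rfl fun a _ => ?_
  refine Finset.sum_subset hs fun b _ hb => ?_
  rw [MvPolynomial.notMem_support_iff] at hb
  simp [hb]

lemma coeff_contract (f F : MvPolynomial σ k) (s : Finset (σ →₀ ℕ)) (hs : F.support ⊆ s)
    (β : σ →₀ ℕ) :
    coeff β (contract f F) = ∑ b ∈ s, if β ≤ b then coeff (b - β) f * coeff b F else 0 := by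
  rw [contract_superset f F s hs, MvPolynomial.coeff_sum]
  simp_rw [MvPolynomial.coeff_sum]
  rw [Finset.sum_comm]
  refine Finset.sum_congr rfl fun b _ => ?_
  have : ∀ a : σ →₀ ℕ,
      coeff β (if a ≤ b then monomial (b - a) (coeff a f * coeff b F) else 0)
        = if β ≤ b ∧ a = b - β then coeff a f * coeff b F else 0 := by
    intro a
    split_ifs with h1 h2 h2
    · rw [coeff_monomial, if_pos]
      obtain ⟨hb2, rfl⟩ := h2
      exact tsub_tsub_cancel_of_le hb2
    · rw [coeff_monomial, if_neg]
      intro hba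
      exact h2 ⟨hba ▸ tsub_le_self, by rw [← hba, tsub_tsub_cancel_of_le h1]⟩
    · exact absurd (h2.2 ▸ tsub_le_self) h1
    · simp
  simp_rw [this]
  by_cases hβ : β ≤ b
  · simp only [hβ, true_and]
    rw [Finset.sum_ite_eq' f.support (b - β) (fun a => coeff a f * coeff b F)]
    split_ifs with h
    · rfl
    · rw [MvPolynomial.notMem_support_iff] at h
      rw [h, zero_mul]
  · simp [hβ]


section Main
variable {k : Type*} [Field k] (a1 a2 b1 b2 : ℕ) (c1 c2 : k)

local notation "R" => MvPolynomial (Fin 2) k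

/-- the big monomial exponent `u` -/
noncomputable def uu : Fin 2 →₀ ℕ := e (a1 + b1) a2
noncomputable def ww : Fin 2 →₀ ℕ := e a1 (a2 + b2)

noncomputable def FF : R :=
  (X 0 : R) ^ a1 * X 1 ^ a2 * (C c1 * X 0 ^ b1 - C c2 * X 1 ^ b2)

lemma FF_eq : FF a1 a2 b1 b2 c1 c2
    = monomial (uu a1 a2 b1) c1 - monomial (ww a1 a2 b2) c2 := by
  unfold FF uu ww
  rw [← mono_eq c1 (a1+b1) a2, ← mono_eq c2 a1 (a2+b2)]
  ring

lemma FF_support : (FF a1 a2 b1 b2 c1 c2).support ⊆ {uu a1 a2 b1, ww a1 a2 b2} := by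
  rw [FF_eq]
  refine (MvPolynomial.support_sub _ _ _).trans ?_
  refine Finset.union_subset ?_ ?_
  · exact (support_monomial_subset).trans (by simp)
  · exact (support_monomial_subset).trans (by simp)

variable (hb1 : 1 ≤ b1) (hb2 : 1 ≤ b2)

include hb1 in
lemma uu_ne_ww : uu a1 a2 b1 ≠ ww a1 a2 b2 := by
  unfold uu ww
  rw [Ne, e_inj]
  rintro ⟨h, -⟩
  omega

include hb1 in
lemma coeff_contract_FF (f : R) (β : Fin 2 →₀ ℕ) :
    coeff β (contract f (FF a1 a2 b1 b2 c1 c2)) =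
      (if β ≤ uu a1 a2 b1 then coeff (uu a1 a2 b1 - β) f * c1 else 0)
        - (if β ≤ ww a1 a2 b2 then coeff (ww a1 a2 b2 - β) f * c2 else 0) := by
  rw [coeff_contract f _ _ (FF_support a1 a2 b1 b2 c1 c2) β]
  rw [Finset.sum_pair (uu_ne_ww a1 a2 b1 b2 hb1)]
  have hu : coeff (uu a1 a2 b1) (FF a1 a2 b1 b2 c1 c2) = c1 := by
    rw [FF_eq, coeff_sub, coeff_monomial, coeff_monomial, if_pos rfl,
      if_neg (Ne.symm (uu_ne_ww a1 a2 b1 b2 hb1))]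
    ring
  have hw : coeff (ww a1 a2 b2) (FF a1 a2 b1 b2 c1 c2) = -c2 := by
    rw [FF_eq, coeff_sub, coeff_monomial, coeff_monomial,
      if_neg (uu_ne_ww a1 a2 b1 b2 hb1), if_pos rfl]
    ring
  rw [hu, hw]
  split_ifs <;> ring

include hb1 in
lemma contract_FF_add (f g : R) :
    contract (f + g) (FF a1 a2 b1 b2 c1 c2)
      = contract f (FF a1 a2 b1 b2 c1 c2) + contract g (FF a1 a2 b1 b2 c1 c2) := by
  ext β
  rw [coeff_add, coeff_contract_FF a1 a2 b1 b2 c1 c2 hb1,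
    coeff_contract_FF a1 a2 b1 b2 c1 c2 hb1, coeff_contract_FF a1 a2 b1 b2 c1 c2 hb1]
  simp only [coeff_add]
  split_ifs <;> ring

include hb1 in
lemma coeff_contract_FF_monomial_mul (γ : Fin 2 →₀ ℕ) (c : k) (f : R) (β : Fin 2 →₀ ℕ) :
    coeff β (contract (monomial γ c * f) (FF a1 a2 b1 b2 c1 c2))
      = c * coeff (β + γ) (contract f (FF a1 a2 b1 b2 c1 c2)) := by
  rw [coeff_contract_FF a1 a2 b1 b2 c1 c2 hb1, coeff_contract_FF a1 a2 b1 b2 c1 c2 hb1]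
  have key : ∀ (b : Fin 2 →₀ ℕ) (cc : k),
      (if β ≤ b then coeff (b - β) (monomial γ c * f) * cc else 0)
        = c * (if β + γ ≤ b then coeff (b - (β + γ)) f * cc else 0) := by
    intro b cc
    by_cases h1 : β ≤ b
    · rw [if_pos h1, coeff_monomial_mul']
      by_cases h2 : γ ≤ b - β
      · have h3 : β + γ ≤ b := by
          rw [add_comm]
          exact (le_tsub_iff_right h1).mp h2
        rw [if_pos h2, if_pos h3, tsub_tsub]
        ring
      · have h3 : ¬ (β + γ ≤ b) := by
          intro h
          exact h2 ((le_tsub_iff_right h1).mpr (by rwa [add_comm γ β]))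
        rw [if_neg h2, if_neg h3]
        ring
    · rw [if_neg h1, if_neg (fun h => h1 (le_trans le_self_add h))]
      ring
  rw [key, key]
  ring

include hb1 in
lemma contract_FF_mul (f : R) (hf : contract f (FF a1 a2 b1 b2 c1 c2) = 0) (h : R) :
    contract (h * f) (FF a1 a2 b1 b2 c1 c2) = 0 := by
  induction h using MvPolynomial.induction_on' with
  | monomial γ c =>
    ext β
    rw [coeff_contract_FF_monomial_mul a1 a2 b1 b2 c1 c2 hb1, hf]
    simp
  | add p q hp hq =>
    rw [add_mul, contract_FF_add a1 a2 b1 b2 c1 c2 hb1, hp, hq, add_zero]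

/-- Condition (A) : the recurrence. -/
def condA (f : R) : Prop :=
  ∀ m n, m ≤ a1 → n ≤ a2 → c1 * coeff (e (m + b1) n) f = c2 * coeff (e m (n + b2)) f

/-- Condition (B). -/
def condB (f : R) : Prop := ∀ m n, m < b1 → n ≤ a2 → coeff (e m n) f = 0

/-- Condition (C). -/
def condC (f : R) : Prop := ∀ m n, m ≤ a1 → n < b2 → coeff (e m n) f = 0

variable (hc1 : c1 ≠ 0) (hc2 : c2 ≠ 0)

lemma uu_sub (s t : ℕ) : uu a1 a2 b1 - e s t = e (a1 + b1 - s) (a2 - t) := by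
  rw [uu, e_sub]

lemma ww_sub (s t : ℕ) : ww a1 a2 b2 - e s t = e (a1 - s) (a2 + b2 - t) := by
  rw [ww, e_sub]

lemma le_uu (s t : ℕ) : e s t ≤ uu a1 a2 b1 ↔ s ≤ a1 + b1 ∧ t ≤ a2 := e_le_e

lemma le_ww (s t : ℕ) : e s t ≤ ww a1 a2 b2 ↔ s ≤ a1 ∧ t ≤ a2 + b2 := e_le_e

include hb1 hc1 hc2 in
lemma ann_iff (f : R) :
    contract f (FF a1 a2 b1 b2 c1 c2) = 0 ↔
      condA a1 a2 b1 b2 c1 c2 f ∧ condB a2 b1 f ∧ condC a1 b2 f := by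
  constructor
  · intro h
    have hco : ∀ β, coeff β (contract f (FF a1 a2 b1 b2 c1 c2)) = 0 := by
      intro β; rw [h]; simp
    refine ⟨?_, ?_, ?_⟩
    · intro m n hm hn
      have := hco (e (a1 - m) (a2 - n))
      rw [coeff_contract_FF a1 a2 b1 b2 c1 c2 hb1, uu_sub, ww_sub,
        if_pos ((le_uu a1 a2 b1 _ _).mpr ⟨by omega, by omega⟩),
        if_pos ((le_ww a1 a2 b2 _ _).mpr ⟨by omega, by omega⟩),
        show a1 + b1 - (a1 - m) = m + b1 by omega, show a2 - (a2 - n) = n by omega,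
        show a1 - (a1 - m) = m by omega, show a2 + b2 - (a2 - n) = n + b2 by omega] at this
      linear_combination this
    · intro m n hm hn
      have := hco (e (a1 + b1 - m) (a2 - n))
      rw [coeff_contract_FF a1 a2 b1 b2 c1 c2 hb1, uu_sub,
        if_pos ((le_uu a1 a2 b1 _ _).mpr ⟨by omega, by omega⟩),
        if_neg (fun hw => by have := ((le_ww a1 a2 b2 _ _).mp hw).1; omega),
        show a1 + b1 - (a1 + b1 - m) = m by omega, show a2 - (a2 - n) = n by omega] at this
      have h0 : coeff (e m n) f * c1 = 0 := by linear_combination this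
      rcases mul_eq_zero.mp h0 with h' | h'
      · exact h'
      · exact absurd h' hc1
    · intro m n hm hn
      have := hco (e (a1 - m) (a2 + b2 - n))
      rw [coeff_contract_FF a1 a2 b1 b2 c1 c2 hb1, ww_sub,
        if_pos ((le_ww a1 a2 b2 _ _).mpr ⟨by omega, by omega⟩),
        if_neg (fun hu => by have := ((le_uu a1 a2 b1 _ _).mp hu).2; omega),
        show a1 - (a1 - m) = m by omega, show a2 + b2 - (a2 + b2 - n) = n by omega] at this
      have h0 : coeff (e m n) f * c2 = 0 := by linear_combination -this
      rcases mul_eq_zero.mp h0 with h' | h'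
      · exact h'
      · exact absurd h' hc2
  · rintro ⟨hA, hB, hC⟩
    ext β
    rw [coeff_contract_FF a1 a2 b1 b2 c1 c2 hb1, coeff_zero]
    obtain ⟨s, t, rfl⟩ : ∃ s t, β = e s t := ⟨β 0, β 1, eta β⟩
    rw [uu_sub, ww_sub]
    by_cases h1 : s ≤ a1 + b1 ∧ t ≤ a2
    · rw [if_pos ((le_uu a1 a2 b1 _ _).mpr h1)]
      by_cases h2 : s ≤ a1 ∧ t ≤ a2 + b2
      · rw [if_pos ((le_ww a1 a2 b2 _ _).mpr h2)]
        have := hA (a1 - s) (a2 - t) (by omega) (by omega)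
        rw [show a1 - s + b1 = a1 + b1 - s by omega,
          show a2 - t + b2 = a2 + b2 - t by omega] at this
        linear_combination this
      · rw [if_neg (fun hw => h2 ((le_ww a1 a2 b2 _ _).mp hw))]
        rw [hB (a1 + b1 - s) (a2 - t) (by omega) (by omega)]
        ring
    · by_cases h2 : s ≤ a1 ∧ t ≤ a2 + b2
      · rw [if_neg (fun hu => h1 ((le_uu a1 a2 b1 _ _).mp hu)),
          if_pos ((le_ww a1 a2 b2 _ _).mpr h2)]
        rw [hC (a1 - s) (a2 + b2 - t) (by omega) (by omega)]
        ring
      · rw [if_neg (fun hu => h1 ((le_uu a1 a2 b1 _ _).mp hu)),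
          if_neg (fun hw => h2 ((le_ww a1 a2 b2 _ _).mp hw))]
        ring


variable (v : ℕ) (hv1 : 1 ≤ v) (hv12 : a1 + 1 ≤ v * b1)
  (hv13 : ∀ i, 1 ≤ i → a1 + 1 ≤ i * b1 → v ≤ i)
  (hv22 : a2 + 1 ≤ v * b2) (hv23 : ∀ i, 1 ≤ i → a2 + 1 ≤ i * b2 → v ≤ i)

include hv1 hv13 in
lemma hA1 : (v - 1) * b1 ≤ a1 := by
  by_contra h
  push_neg at h
  rcases Nat.eq_zero_or_pos (v - 1) with h0 | h0
  · rw [h0, zero_mul] at h; omega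
  · have := hv13 (v - 1) h0 h
    omega

include hv1 hv23 in
lemma hA2 : (v - 1) * b2 ≤ a2 := by
  by_contra h
  push_neg at h
  rcases Nat.eq_zero_or_pos (v - 1) with h0 | h0
  · rw [h0, zero_mul] at h; omega
  · have := hv23 (v - 1) h0 h
    omega

include hv1 in
lemma hmul1 : v * b1 = (v - 1) * b1 + b1 := by
  rw [← Nat.succ_pred_eq_of_pos hv1, Nat.succ_mul]
  simp [Nat.pred_eq_sub_one]

include hv1 in
lemma hmul2 : v * b2 = (v - 1) * b2 + b2 := by
  rw [← Nat.succ_pred_eq_of_pos hv1, Nat.succ_mul]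
  simp [Nat.pred_eq_sub_one]

include hv1 hv13 hv23 in
omit hc1 hc2 in
lemma q_eq : qPoly k a1 a2 b1 b2 v c1 c2 =
    ∑ i ∈ Finset.range v,
      C (c1 ^ (v - 1 - i) * c2 ^ i) * X 0 ^ ((a1 + 1 - (v - 1) * b1) + i * b1) *
        X 1 ^ ((a2 + 1 - (v - 1) * b2) + (v - 1 - i) * b2) := by
  unfold qPoly
  refine Finset.sum_congr rfl fun i hi => ?_
  rw [Finset.mem_range] at hi
  have h1 : (v - 1 - i) * b1 + i * b1 = (v - 1) * b1 := by
    rw [← add_mul]; congr 1; omega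
  have h2 : (v - 1 - i) * b2 + i * b2 = (v - 1) * b2 := by
    rw [← add_mul]; congr 1; omega
  have hA1' := hA1 a1 b1 v hv1 hv13
  have hA2' := hA2 a2 b2 v hv1 hv23
  congr 2
  · congr 1
    set X1 := (v - 1 - i) * b1 with hX1
    set Y1 := i * b1 with hY1
    set Z1 := (v - 1) * b1 with hZ1
    omega
  · congr 1
    set X2 := (v - 1 - i) * b2 with hX2
    set Y2 := i * b2 with hY2
    set Z2 := (v - 1) * b2 with hZ2
    omega

lemma coeff_p (s t : ℕ) :
    coeff (e s t) (pPoly k b1 b2 v c1 c2) =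
      ∑ i ∈ Finset.range (v + 1),
        if s = i * b1 ∧ t = (v - i) * b2 then c1 ^ (v - i) * c2 ^ i else 0 := by
  unfold pPoly
  rw [MvPolynomial.coeff_sum]
  refine Finset.sum_congr rfl fun i _ => ?_
  rw [mono_eq, coeff_monomial]
  by_cases h : s = i * b1 ∧ t = (v - i) * b2
  · rw [if_pos, if_pos h]
    rw [e_inj]
    exact ⟨h.1.symm, h.2.symm⟩
  · rw [if_neg, if_neg h]
    intro he
    rw [e_inj] at he
    exact h ⟨he.1.symm, he.2.symm⟩

lemma coeff_p_zero (s t : ℕ) (h : ∀ i, i ≤ v → ¬(s = i * b1 ∧ t = (v - i) * b2)) :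
    coeff (e s t) (pPoly k b1 b2 v c1 c2) = 0 := by
  rw [coeff_p]
  refine Finset.sum_eq_zero fun i hi => ?_
  rw [Finset.mem_range] at hi
  rw [if_neg (h i (by omega))]

include hb1 in
lemma coeff_p_chain (i : ℕ) (hi : i ≤ v) :
    coeff (e (i * b1) ((v - i) * b2)) (pPoly k b1 b2 v c1 c2) = c1 ^ (v - i) * c2 ^ i := by
  rw [coeff_p]
  rw [Finset.sum_eq_single i]
  · rw [if_pos ⟨rfl, rfl⟩]
  · intro j _ hji
    rw [if_neg]
    rintro ⟨hj, -⟩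
    exact hji (Nat.eq_of_mul_eq_mul_right hb1 hj).symm
  · intro hni
    exact absurd (Finset.mem_range.mpr (by omega)) hni

lemma coeff_q' (s t : ℕ) :
    coeff (e s t) (∑ i ∈ Finset.range v,
      (C (c1 ^ (v - 1 - i) * c2 ^ i) * X 0 ^ ((a1 + 1 - (v - 1) * b1) + i * b1) *
        X 1 ^ ((a2 + 1 - (v - 1) * b2) + (v - 1 - i) * b2) : MvPolynomial (Fin 2) k)) =
      ∑ i ∈ Finset.range v,
        if s = (a1 + 1 - (v - 1) * b1) + i * b1 ∧ t = (a2 + 1 - (v - 1) * b2) + (v - 1 - i) * b2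
        then c1 ^ (v - 1 - i) * c2 ^ i else 0 := by
  rw [MvPolynomial.coeff_sum]
  refine Finset.sum_congr rfl fun i _ => ?_
  rw [mono_eq, coeff_monomial]
  by_cases h : s = (a1 + 1 - (v - 1) * b1) + i * b1 ∧
      t = (a2 + 1 - (v - 1) * b2) + (v - 1 - i) * b2
  · rw [if_pos, if_pos h]
    rw [e_inj]
    exact ⟨h.1.symm, h.2.symm⟩
  · rw [if_neg, if_neg h]
    intro he
    rw [e_inj] at he
    exact h ⟨he.1.symm, he.2.symm⟩

include hb1 in
lemma coeff_q_chain' (i : ℕ) (hi : i < v) :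
    coeff (e ((a1 + 1 - (v - 1) * b1) + i * b1) ((a2 + 1 - (v - 1) * b2) + (v - 1 - i) * b2))
      (∑ i ∈ Finset.range v,
        (C (c1 ^ (v - 1 - i) * c2 ^ i) * X 0 ^ ((a1 + 1 - (v - 1) * b1) + i * b1) *
          X 1 ^ ((a2 + 1 - (v - 1) * b2) + (v - 1 - i) * b2) : MvPolynomial (Fin 2) k)) =
      c1 ^ (v - 1 - i) * c2 ^ i := by
  rw [coeff_q']
  rw [Finset.sum_eq_single i]
  · rw [if_pos ⟨rfl, rfl⟩]
  · intro j _ hji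
    rw [if_neg]
    rintro ⟨hj, -⟩
    have hj2 : i * b1 = j * b1 := by omega
    exact hji (Nat.eq_of_mul_eq_mul_right hb1 hj2).symm
  · intro hni
    exact absurd (Finset.mem_range.mpr hi) hni

lemma coeff_q_zero' (s t : ℕ)
    (h : ∀ i, i < v → ¬(s = (a1 + 1 - (v - 1) * b1) + i * b1 ∧
      t = (a2 + 1 - (v - 1) * b2) + (v - 1 - i) * b2)) :
    coeff (e s t) (∑ i ∈ Finset.range v,
      (C (c1 ^ (v - 1 - i) * c2 ^ i) * X 0 ^ ((a1 + 1 - (v - 1) * b1) + i * b1) *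
        X 1 ^ ((a2 + 1 - (v - 1) * b2) + (v - 1 - i) * b2) : MvPolynomial (Fin 2) k)) = 0 := by
  rw [coeff_q']
  refine Finset.sum_eq_zero fun i hi => ?_
  rw [Finset.mem_range] at hi
  rw [if_neg (h i hi)]

include hb1 hb2 hv1 hv12 hv13 hv22 hv23 hc1 hc2 in
lemma p_mem_ann :
    contract (pPoly k b1 b2 v c1 c2) (FF a1 a2 b1 b2 c1 c2) = 0 := by
  rw [ann_iff a1 a2 b1 b2 c1 c2 hb1 hc1 hc2]
  refine ⟨?_, ?_, ?_⟩
  · -- condA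
    intro m n hm hn
    by_cases hch : ∃ i, i ≤ v ∧ m + b1 = i * b1 ∧ n = (v - i) * b2
    · obtain ⟨i, hi, h1, h2⟩ := hch
      have hi1 : 1 ≤ i := by
        rcases Nat.eq_zero_or_pos i with h0 | h0
        · rw [h0, zero_mul] at h1; omega
        · exact h0
      obtain ⟨j, rfl⟩ : ∃ j, i = j + 1 := ⟨i - 1, by omega⟩
      have hm1 : j * b1 + b1 = (j + 1) * b1 := by rw [Nat.succ_mul]
      have hn1 : (v - (j + 1)) * b2 + b2 = (v - j) * b2 := by
        rw [← Nat.succ_mul]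
        congr 1
        omega
      have hm2 : m = j * b1 := by omega
      have hn2 : n + b2 = (v - j) * b2 := by omega
      rw [show e (m + b1) n = e ((j + 1) * b1) ((v - (j + 1)) * b2) by
          rw [e_inj]; exact ⟨h1, h2⟩,
        show e m (n + b2) = e (j * b1) ((v - j) * b2) by
          rw [e_inj]; exact ⟨hm2, hn2⟩,
        coeff_p_chain b1 b2 c1 c2 hb1 v (j + 1) hi,
        coeff_p_chain b1 b2 c1 c2 hb1 v j (by omega)]
      rw [show v - j = (v - (j + 1)) + 1 by omega, pow_succ, pow_succ]
      ring
    · rw [coeff_p_zero b1 b2 c1 c2 v (m + b1) n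
        (fun i hi hc => hch ⟨i, hi, hc.1, hc.2⟩)]
      rw [coeff_p_zero b1 b2 c1 c2 v m (n + b2)]
      · ring
      · rintro i hi ⟨h1, h2⟩
        have hvi : 1 ≤ v - i := by
          rcases Nat.eq_zero_or_pos (v - i) with h0 | h0
          · rw [h0, zero_mul] at h2; omega
          · exact h0
        refine hch ⟨i + 1, by omega, ?_, ?_⟩
        · rw [Nat.succ_mul]; omega
        · have : (v - (i + 1)) * b2 + b2 = (v - i) * b2 := by
            rw [← Nat.succ_mul]; congr 1; omega
          omega
  · -- condB
    intro m n hm hn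
    refine coeff_p_zero b1 b2 c1 c2 v m n ?_
    rintro i hi ⟨h1, h2⟩
    rcases Nat.eq_zero_or_pos i with h0 | h0
    · rw [h0] at h2
      simp only [Nat.sub_zero] at h2
      omega
    · have : b1 ≤ i * b1 := le_mul_of_one_le_left (Nat.zero_le _) h0
      omega
  · -- condC
    intro m n hm hn
    refine coeff_p_zero b1 b2 c1 c2 v m n ?_
    rintro i hi ⟨h1, h2⟩
    have hvi : v - i = 0 := by
      by_contra h0
      have : b2 ≤ (v - i) * b2 := le_mul_of_one_le_left (Nat.zero_le _) (by omega)
      omega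
    have hiv : i = v := by omega
    rw [hiv] at h1
    omega

include hb1 hb2 hv1 hv12 hv13 hv22 hv23 hc1 hc2 in
lemma q_mem_ann :
    contract (qPoly k a1 a2 b1 b2 v c1 c2) (FF a1 a2 b1 b2 c1 c2) = 0 := by
  have hA1' := hA1 a1 b1 v hv1 hv13
  have hA2' := hA2 a2 b2 v hv1 hv23
  have hmul1' := hmul1 b1 v hv1
  have hmul2' := hmul2 b2 v hv1
  rw [q_eq a1 a2 b1 b2 c1 c2 v hv1 hv13 hv23]
  rw [ann_iff a1 a2 b1 b2 c1 c2 hb1 hc1 hc2]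
  refine ⟨?_, ?_, ?_⟩
  · -- condA
    intro m n hm hn
    by_cases hch : ∃ i, i < v ∧ m + b1 = (a1 + 1 - (v - 1) * b1) + i * b1 ∧
        n = (a2 + 1 - (v - 1) * b2) + (v - 1 - i) * b2
    · obtain ⟨i, hi, h1, h2⟩ := hch
      have hi1 : 1 ≤ i := by
        rcases Nat.eq_zero_or_pos i with h0 | h0
        · exfalso
          rw [h0, zero_mul, add_zero] at h1
          have : v - 1 - 0 = v - 1 := by omega
          rw [h0, this] at h2
          omega
        · exact h0
      obtain ⟨j, rfl⟩ : ∃ j, i = j + 1 := ⟨i - 1, by omega⟩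
      have hs1 : (j + 1) * b1 = j * b1 + b1 := by rw [Nat.succ_mul]
      have hs2 : (v - 1 - j) * b2 = (v - 1 - (j + 1)) * b2 + b2 := by
        rw [← Nat.succ_mul]; congr 1; omega
      have hm2 : m = (a1 + 1 - (v - 1) * b1) + j * b1 := by omega
      have hn2 : n + b2 = (a2 + 1 - (v - 1) * b2) + (v - 1 - j) * b2 := by omega
      rw [show e (m + b1) n
            = e ((a1 + 1 - (v - 1) * b1) + (j + 1) * b1)
              ((a2 + 1 - (v - 1) * b2) + (v - 1 - (j + 1)) * b2) by
          rw [e_inj]; exact ⟨h1, h2⟩,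
        show e m (n + b2)
            = e ((a1 + 1 - (v - 1) * b1) + j * b1)
              ((a2 + 1 - (v - 1) * b2) + (v - 1 - j) * b2) by
          rw [e_inj]; exact ⟨hm2, hn2⟩,
        coeff_q_chain' a1 a2 b1 b2 c1 c2 hb1 v (j + 1) hi,
        coeff_q_chain' a1 a2 b1 b2 c1 c2 hb1 v j (by omega)]
      rw [show v - 1 - j = (v - 1 - (j + 1)) + 1 by omega, pow_succ, pow_succ]
      ring
    · rw [coeff_q_zero' a1 a2 b1 b2 c1 c2 v (m + b1) n
        (fun i hi hc => hch ⟨i, hi, hc.1, hc.2⟩)]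
      rw [coeff_q_zero' a1 a2 b1 b2 c1 c2 v m (n + b2)]
      · ring
      · rintro i hi ⟨h1, h2⟩
        rcases Nat.eq_zero_or_pos (v - 1 - i) with h0 | h0
        · exfalso
          have hiv : i = v - 1 := by omega
          rw [h0, zero_mul, add_zero] at h2
          rw [hiv] at h1
          omega
        · refine hch ⟨i + 1, by omega, ?_, ?_⟩
          · have hs1 : (i + 1) * b1 = i * b1 + b1 := by rw [Nat.succ_mul]
            omega
          · have hs2 : (v - 1 - i) * b2 = (v - 1 - (i + 1)) * b2 + b2 := by
              rw [← Nat.succ_mul]; congr 1; omega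
            omega
  · -- condB
    intro m n hm hn
    refine coeff_q_zero' a1 a2 b1 b2 c1 c2 v m n ?_
    rintro i hi ⟨h1, h2⟩
    rcases Nat.eq_zero_or_pos i with h0 | h0
    · have : v - 1 - 0 = v - 1 := by omega
      rw [h0, this] at h2
      omega
    · have : b1 ≤ i * b1 := le_mul_of_one_le_left (Nat.zero_le _) h0
      omega
  · -- condC
    intro m n hm hn
    refine coeff_q_zero' a1 a2 b1 b2 c1 c2 v m n ?_
    rintro i hi ⟨h1, h2⟩
    rcases Nat.eq_zero_or_pos (v - 1 - i) with h0 | h0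
    · have hiv : i = v - 1 := by omega
      rw [hiv] at h1
      omega
    · have : b2 ≤ (v - 1 - i) * b2 := le_mul_of_one_le_left (Nat.zero_le _) h0
      omega

omit hc1 hc2 in
lemma aux1 (c : k) (E s t : ℕ) :
    (X 1 ^ E : MvPolynomial (Fin 2) k) * (C c * X 0 ^ s * X 1 ^ t)
      = monomial (e s (t + E)) c := by
  rw [← mono_eq]
  ring

omit hc1 hc2 in
lemma aux2 (c c' : k) (d s t : ℕ) :
    (C c * X 0 ^ d : MvPolynomial (Fin 2) k) * (C c' * X 0 ^ s * X 1 ^ t)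
      = monomial (e (d + s) t) (c * c') := by
  rw [← mono_eq, C_mul, pow_add]
  ring

include hb1 hb2 hv1 hv12 hv13 hv22 hv23 in
omit hc1 hc2 in
lemma key_identity :
    (X 1 ^ (a2 + 1 - (v - 1) * b2) : MvPolynomial (Fin 2) k) * pPoly k b1 b2 v c1 c2
      = C c2 * X 0 ^ (b1 - (a1 + 1 - (v - 1) * b1)) * qPoly k a1 a2 b1 b2 v c1 c2
        + C (c1 ^ v) * X 1 ^ (a2 + b2 + 1) := by
  have hA1' := hA1 a1 b1 v hv1 hv13
  have hA2' := hA2 a2 b2 v hv1 hv23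
  have hmul1' := hmul1 b1 v hv1
  have hmul2' := hmul2 b2 v hv1
  rw [q_eq a1 a2 b1 b2 c1 c2 v hv1 hv13 hv23]
  unfold pPoly
  rw [Finset.mul_sum, Finset.sum_range_succ', Finset.mul_sum]
  congr 1
  · refine Finset.sum_congr rfl fun i hi => ?_
    rw [Finset.mem_range] at hi
    have hsm : (i + 1) * b1 = i * b1 + b1 := by rw [Nat.succ_mul]
    rw [aux1, aux2]
    rw [show e ((i + 1) * b1) ((v - (i + 1)) * b2 + (a2 + 1 - (v - 1) * b2))
        = e ((b1 - (a1 + 1 - (v - 1) * b1)) + ((a1 + 1 - (v - 1) * b1) + i * b1))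
          ((a2 + 1 - (v - 1) * b2) + (v - 1 - i) * b2) by
      rw [e_inj]
      constructor <;> [omega; (rw [show v - (i + 1) = v - 1 - i by omega]; omega)]]
    congr 1
    rw [show v - (i + 1) = v - 1 - i by omega, pow_succ]
    ring
  · rw [aux1]
    rw [show (C (c1 ^ v) * X 1 ^ (a2 + b2 + 1) : MvPolynomial (Fin 2) k)
        = monomial (e (0 * b1) (a2 + b2 + 1)) (c1 ^ v) by
      rw [← mono_eq, zero_mul, pow_zero]
      ring]
    rw [show (v - 0) * b2 + (a2 + 1 - (v - 1) * b2) = a2 + b2 + 1 by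
      rw [Nat.sub_zero]; omega]
    rw [show c1 ^ (v - 0) * c2 ^ 0 = c1 ^ v by rw [Nat.sub_zero, pow_zero, mul_one]]

include hb1 hb2 hv1 hv12 hv13 hv22 hv23 hc1 hc2 in
lemma span_sub_ann (f : MvPolynomial (Fin 2) k)
    (hf : f ∈ Ideal.span {pPoly k b1 b2 v c1 c2, qPoly k a1 a2 b1 b2 v c1 c2}) :
    contract f (FF a1 a2 b1 b2 c1 c2) = 0 := by
  rw [Ideal.mem_span_pair] at hf
  obtain ⟨h1, h2, rfl⟩ := hf
  rw [contract_FF_add a1 a2 b1 b2 c1 c2 hb1]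
  rw [contract_FF_mul a1 a2 b1 b2 c1 c2 hb1 _
      (p_mem_ann a1 a2 b1 b2 c1 c2 hb1 hb2 hc1 hc2 v hv1 hv12 hv13 hv22 hv23) h1,
    contract_FF_mul a1 a2 b1 b2 c1 c2 hb1 _
      (q_mem_ann a1 a2 b1 b2 c1 c2 hb1 hb2 hc1 hc2 v hv1 hv12 hv13 hv22 hv23) h2,
    add_zero]

include hb1 hb2 hv1 hv12 hv13 hv22 hv23 hc1 in
omit hc2 in
lemma M2_mem :
    (X 1 ^ (a2 + b2 + 1) : MvPolynomial (Fin 2) k)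
      ∈ Ideal.span {pPoly k b1 b2 v c1 c2, qPoly k a1 a2 b1 b2 v c1 c2} := by
  rw [Ideal.mem_span_pair]
  refine ⟨C ((c1 ^ v)⁻¹) * X 1 ^ (a2 + 1 - (v - 1) * b2),
    -(C ((c1 ^ v)⁻¹ * c2) * X 0 ^ (b1 - (a1 + 1 - (v - 1) * b1))), ?_⟩
  have hk := key_identity a1 a2 b1 b2 c1 c2 hb1 hb2 v hv1 hv12 hv13 hv22 hv23
  have hcv : (c1 ^ v) ≠ 0 := pow_ne_zero _ hc1
  have step1 : C ((c1 ^ v)⁻¹) * X 1 ^ (a2 + 1 - (v - 1) * b2) * pPoly k b1 b2 v c1 c2 +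
      -(C ((c1 ^ v)⁻¹ * c2) * X 0 ^ (b1 - (a1 + 1 - (v - 1) * b1))) * qPoly k a1 a2 b1 b2 v c1 c2
      = C ((c1 ^ v)⁻¹) * ((X 1 ^ (a2 + 1 - (v - 1) * b2)) * pPoly k b1 b2 v c1 c2
          - C c2 * X 0 ^ (b1 - (a1 + 1 - (v - 1) * b1)) * qPoly k a1 a2 b1 b2 v c1 c2) := by
    rw [C_mul]
    ring
  rw [step1, hk]
  rw [show C c2 * X 0 ^ (b1 - (a1 + 1 - (v - 1) * b1)) * qPoly k a1 a2 b1 b2 v c1 c2 +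
        C (c1 ^ v) * X 1 ^ (a2 + b2 + 1) -
        C c2 * X 0 ^ (b1 - (a1 + 1 - (v - 1) * b1)) * qPoly k a1 a2 b1 b2 v c1 c2
      = C (c1 ^ v) * X 1 ^ (a2 + b2 + 1) by ring]
  rw [← mul_assoc, ← C_mul, inv_mul_cancel₀ hcv, C_1, one_mul]

include hb1 hb2 hv1 hv12 hv13 hv22 hv23 hc1 hc2 in
lemma crux (f : MvPolynomial (Fin 2) k)
    (hfA : condA a1 a2 b1 b2 c1 c2 f) (hfB : condB a2 b1 f) (hfC : condC a1 b2 f)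
    (m n : ℕ) (hmn : coeff (e m n) f ≠ 0)
    (hmax : ∀ s t, coeff (e s t) f ≠ 0 → toLex (s, t) ≤ toLex (m, n)) :
    (v * b1 ≤ m) ∨ (a1 + 1 ≤ m ∧ a2 + 1 - (v - 1) * b2 ≤ n) ∨ (a2 + b2 + 1 ≤ n) := by
  have hA1' := hA1 a1 b1 v hv1 hv13
  have hA2' := hA2 a2 b2 v hv1 hv23
  have hmul1' := hmul1 b1 v hv1
  have hmul2' := hmul2 b2 v hv1
  by_contra hcon
  push_neg at hcon
  obtain ⟨h1, h2, h3⟩ := hcon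
  rcases le_or_gt m a1 with hma | hma
  · rcases lt_or_ge n b2 with hnb | hnb
    · exact hmn (hfC m n hma hnb)
    · have heq := hfA m (n - b2) hma (by omega)
      rw [show n - b2 + b2 = n by omega] at heq
      have hne : coeff (e (m + b1) (n - b2)) f ≠ 0 := by
        intro h0
        rw [h0, mul_zero] at heq
        exact hmn (by
          rcases mul_eq_zero.mp heq.symm with h' | h'
          · exact absurd h' hc2
          · exact h')
      have := hmax _ _ hne
      rw [Prod.Lex.toLex_le_toLex] at this
      simp only at this
      omega
  · have hn2 : n < a2 + 1 - (v - 1) * b2 := h2 hma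
    have chain : ∀ j, j ≤ v - 1 → coeff (e (m - j * b1) (n + j * b2)) f ≠ 0 := by
      intro j
      induction j with
      | zero => simpa using hmn
      | succ j ihj =>
        intro hj
        have hprev := ihj (by omega)
        have hQ : (j + 1) * b1 = j * b1 + b1 := by rw [Nat.succ_mul]
        have hQ2 : (j + 1) * b2 = j * b2 + b2 := by rw [Nat.succ_mul]
        have hT : (v - 1 - j) * b1 = (v - 1 - (j + 1)) * b1 + b1 := by
          rw [← Nat.succ_mul]; congr 1; omega
        have hTZ : (v - 1 - j) * b1 ≤ (v - 1) * b1 := Nat.mul_le_mul_right _ (by omega)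
        have hQZ : (j + 1) * b1 ≤ (v - 1) * b1 := Nat.mul_le_mul_right _ (by omega)
        have hQS : (v - 1 - (j + 1)) * b1 + (j + 1) * b1 = (v - 1) * b1 := by
          rw [← add_mul]; congr 1; omega
        have hjZ2 : j * b2 ≤ (v - 1) * b2 := Nat.mul_le_mul_right _ (by omega)
        have heq := hfA (m - (j + 1) * b1) (n + j * b2) (by omega) (by omega)
        rw [show m - (j + 1) * b1 + b1 = m - j * b1 by omega,
          show n + j * b2 + b2 = n + (j + 1) * b2 by omega] at heq
        intro h0
        rw [h0, mul_zero] at heq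
        rcases mul_eq_zero.mp heq with h' | h'
        · exact hc1 h'
        · exact hprev h'
    have hend := chain (v - 1) le_rfl
    refine hend (hfB _ _ ?_ ?_)
    · omega
    · omega

include hb1 in
omit hc1 hc2 in
lemma p_bound (s t : ℕ) (hne : coeff (e s t) (pPoly k b1 b2 v c1 c2) ≠ 0) :
    toLex (s, t) ≤ toLex (v * b1, 0) := by
  by_contra hnle
  apply hne
  apply coeff_p_zero
  rintro i hi ⟨rfl, rfl⟩
  apply hnle
  have h1 : i * b1 ≤ v * b1 := Nat.mul_le_mul_right _ hi
  rcases Nat.lt_or_ge (i * b1) (v * b1) with h2 | h2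
  · rw [Prod.Lex.toLex_le_toLex]
    exact Or.inl h2
  · have hiv : i = v := Nat.eq_of_mul_eq_mul_right hb1 (by omega)
    rw [Prod.Lex.toLex_le_toLex]
    right
    constructor
    · omega
    · simp [hiv]

include hb1 in
omit hc1 hc2 in
lemma p_lc : coeff (e (v * b1) 0) (pPoly k b1 b2 v c1 c2) = c2 ^ v := by
  have h0 : (v - v) * b2 = 0 := by simp
  rw [show e (v * b1) 0 = e (v * b1) ((v - v) * b2) by rw [e_inj]; exact ⟨rfl, by omega⟩]
  rw [coeff_p_chain b1 b2 c1 c2 hb1 v v le_rfl]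
  simp

include hb1 hv1 hv13 hv23 in
omit hc1 hc2 in
lemma q_bound (s t : ℕ) (hne : coeff (e s t) (qPoly k a1 a2 b1 b2 v c1 c2) ≠ 0) :
    toLex (s, t) ≤ toLex (a1 + 1, a2 + 1 - (v - 1) * b2) := by
  have hA1' := hA1 a1 b1 v hv1 hv13
  rw [q_eq a1 a2 b1 b2 c1 c2 v hv1 hv13 hv23] at hne
  by_contra hnle
  apply hne
  apply coeff_q_zero'
  rintro i hi ⟨rfl, rfl⟩
  apply hnle
  have h1 : i * b1 ≤ (v - 1) * b1 := Nat.mul_le_mul_right _ (by omega)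
  rcases Nat.lt_or_ge (i * b1) ((v - 1) * b1) with h2 | h2
  · rw [Prod.Lex.toLex_le_toLex]
    left
    omega
  · have hiv : i = v - 1 := Nat.eq_of_mul_eq_mul_right hb1 (by omega)
    have h3 : (v - 1 - i) * b2 = 0 := by rw [hiv]; simp
    rw [Prod.Lex.toLex_le_toLex]
    right
    constructor
    · omega
    · simp only
      omega

include hb1 hv1 hv13 hv23 in
omit hc1 hc2 in
lemma q_lc : coeff (e (a1 + 1) (a2 + 1 - (v - 1) * b2)) (qPoly k a1 a2 b1 b2 v c1 c2)
    = c2 ^ (v - 1) := by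
  have hA1' := hA1 a1 b1 v hv1 hv13
  rw [q_eq a1 a2 b1 b2 c1 c2 v hv1 hv13 hv23]
  have h0 : (v - 1 - (v - 1)) * b2 = 0 := by simp
  rw [show e (a1 + 1) (a2 + 1 - (v - 1) * b2)
      = e ((a1 + 1 - (v - 1) * b1) + (v - 1) * b1)
        ((a2 + 1 - (v - 1) * b2) + (v - 1 - (v - 1)) * b2) by
    rw [e_inj]; exact ⟨by omega, by omega⟩]
  rw [coeff_q_chain' a1 a2 b1 b2 c1 c2 hb1 v (v - 1) (by omega)]
  simp

omit hc1 hc2 in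
lemma M2_eq (N : ℕ) : (X 1 ^ N : MvPolynomial (Fin 2) k) = monomial (e 0 N) 1 := by
  rw [← mono_eq]
  simp

omit hc1 hc2 in
lemma M2_lc (N : ℕ) : coeff (e 0 N) (X 1 ^ N : MvPolynomial (Fin 2) k) = 1 := by
  rw [M2_eq, coeff_monomial, if_pos rfl]

omit hc1 hc2 in
lemma M2_bound (N : ℕ) (s t : ℕ) (hne : coeff (e s t) (X 1 ^ N : MvPolynomial (Fin 2) k) ≠ 0) :
    toLex (s, t) ≤ toLex (0, N) := by
  rw [M2_eq, coeff_monomial] at hne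
  by_cases h : e 0 N = e s t
  · rw [e_inj] at h
    obtain ⟨h1, h2⟩ := h
    rw [Prod.Lex.toLex_le_toLex]
    right
    exact ⟨h1.symm, le_of_eq h2.symm⟩
  · exact absurd (if_neg h) hne

include hb1 hb2 hv1 hv12 hv13 hv22 hv23 hc1 hc2 in
lemma ann_sub_span (f : MvPolynomial (Fin 2) k)
    (hf : contract f (FF a1 a2 b1 b2 c1 c2) = 0) :
    f ∈ Ideal.span {pPoly k b1 b2 v c1 c2, qPoly k a1 a2 b1 b2 v c1 c2} := by
  have hA1' := hA1 a1 b1 v hv1 hv13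
  have hA2' := hA2 a2 b2 v hv1 hv23
  have hmul1' := hmul1 b1 v hv1
  have hmul2' := hmul2 b2 v hv1
  have main : ∀ L : ℕ ×ₗ ℕ, ∀ g : MvPolynomial (Fin 2) k,
      contract g (FF a1 a2 b1 b2 c1 c2) = 0 →
      (∀ s t, coeff (e s t) g ≠ 0 → toLex (s, t) < L) →
      g ∈ Ideal.span {pPoly k b1 b2 v c1 c2, qPoly k a1 a2 b1 b2 v c1 c2} := by
    intro L
    induction L using WellFoundedLT.induction with
    | _ L IH =>
      intro g hg hbd
      by_cases hg0 : g = 0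
      · rw [hg0]; exact Ideal.zero_mem _
      have hsupp : g.support.Nonempty := MvPolynomial.support_nonempty.mpr hg0
      have himg : (g.support.image (fun β => (toLex (β 0, β 1) : ℕ ×ₗ ℕ))).Nonempty :=
        hsupp.image _
      obtain ⟨β, hβmem, hβmax⟩ := Finset.mem_image.mp (Finset.max'_mem _ himg)
      set m := β 0 with hm
      set n := β 1 with hn
      have heβ : e m n = β := (eta β).symm
      have hlead : coeff (e m n) g ≠ 0 := by
        rw [heβ]; exact MvPolynomial.mem_support_iff.mp hβmem
      have hmax : ∀ s t, coeff (e s t) g ≠ 0 → toLex (s, t) ≤ toLex (m, n) := by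
        intro s t hst
        rw [show (toLex (m, n) : ℕ ×ₗ ℕ)
            = (g.support.image (fun β => (toLex (β 0, β 1) : ℕ ×ₗ ℕ))).max' himg from hβmax]
        apply Finset.le_max'
        refine Finset.mem_image.mpr ⟨e s t, MvPolynomial.mem_support_iff.mpr hst, ?_⟩
        simp
      obtain ⟨hgA, hgB, hgC⟩ := (ann_iff a1 a2 b1 b2 c1 c2 hb1 hc1 hc2 g).mp hg
      have red : ∀ (g0 : MvPolynomial (Fin 2) k) (mg ng : ℕ) (d : k), d ≠ 0 →
          g0 ∈ Ideal.span {pPoly k b1 b2 v c1 c2, qPoly k a1 a2 b1 b2 v c1 c2} →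
          coeff (e mg ng) g0 = d →
          (∀ s t, coeff (e s t) g0 ≠ 0 → toLex (s, t) ≤ toLex (mg, ng)) →
          mg ≤ m → ng ≤ n →
          g ∈ Ideal.span {pPoly k b1 b2 v c1 c2, qPoly k a1 a2 b1 b2 v c1 c2} := by
        intro g0 mg ng d hd hg0I hg0lc hg0bd hmg hng
        set c0 := coeff (e m n) g * d⁻¹ with hc0
        set f' := g + (monomial (e (m - mg) (n - ng)) (-c0)) * g0 with hf'
        have hgf' : g = f' - (monomial (e (m - mg) (n - ng)) (-c0)) * g0 := by
          rw [hf']; ring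
        have hf'ann : contract f' (FF a1 a2 b1 b2 c1 c2) = 0 := by
          rw [hf', contract_FF_add a1 a2 b1 b2 c1 c2 hb1, hg,
            contract_FF_mul a1 a2 b1 b2 c1 c2 hb1 g0
              (span_sub_ann a1 a2 b1 b2 c1 c2 hb1 hb2 hc1 hc2 v hv1 hv12 hv13 hv22 hv23 g0 hg0I),
            add_zero]
        have hf'bd : ∀ s t, coeff (e s t) f' ≠ 0 → toLex (s, t) < toLex (m, n) := by
          intro s t hst
          have hcoeff : coeff (e s t) f' = coeff (e s t) g +
              (if e (m - mg) (n - ng) ≤ e s t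
               then (-c0) * coeff (e s t - e (m - mg) (n - ng)) g0 else 0) := by
            rw [hf', coeff_add, coeff_monomial_mul']
          have hle : toLex (s, t) ≤ toLex (m, n) := by
            by_contra hnle
            apply hst
            rw [hcoeff]
            have hgz : coeff (e s t) g = 0 := by
              by_contra hx
              exact hnle (hmax s t hx)
            rw [hgz, zero_add]
            split_ifs with hif
            · have hzz : coeff (e s t - e (m - mg) (n - ng)) g0 = 0 := by
                by_contra hx
                apply hnle
                rw [e_sub] at hx
                have hb := hg0bd _ _ hx
                rw [e_le_e] at hif
                rw [Prod.Lex.toLex_le_toLex] at hb ⊢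
                simp only at hb ⊢
                omega
              rw [hzz, mul_zero]
            · rfl
          have hne : (s, t) ≠ (m, n) := by
            intro heq
            rw [Prod.mk.injEq] at heq
            obtain ⟨rfl, rfl⟩ := heq
            apply hst
            rw [hcoeff, if_pos (by rw [e_le_e]; omega), e_sub,
              show m - (m - mg) = mg by omega, show n - (n - ng) = ng by omega,
              hg0lc, hc0]
            field_simp
            ring
          refine lt_of_le_of_ne hle (fun hx => hne ?_)
          exact toLex.injective hx
        have hLm : (toLex (m, n) : ℕ ×ₗ ℕ) < L := hbd m n hlead
        have hf'mem := IH (toLex (m, n)) hLm f' hf'ann hf'bd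
        rw [hgf']
        exact Ideal.sub_mem _ hf'mem (Ideal.mul_mem_left _ _ hg0I)
      rcases crux a1 a2 b1 b2 c1 c2 hb1 hb2 hc1 hc2 v hv1 hv12 hv13 hv22 hv23 g hgA hgB hgC
          m n hlead hmax with hcase | hcase | hcase
      · exact red (pPoly k b1 b2 v c1 c2) (v * b1) 0 (c2 ^ v) (pow_ne_zero _ hc2)
          (Ideal.subset_span (by simp)) (p_lc b1 b2 c1 c2 hb1 v)
          (p_bound b1 b2 c1 c2 hb1 v) hcase (Nat.zero_le n)
      · exact red (qPoly k a1 a2 b1 b2 v c1 c2) (a1 + 1) (a2 + 1 - (v - 1) * b2)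
          (c2 ^ (v - 1)) (pow_ne_zero _ hc2) (Ideal.subset_span (by simp))
          (q_lc a1 a2 b1 b2 c1 c2 hb1 v hv1 hv13 hv23)
          (q_bound a1 a2 b1 b2 c1 c2 hb1 v hv1 hv13 hv23) hcase.1 hcase.2
      · exact red (X 1 ^ (a2 + b2 + 1)) 0 (a2 + b2 + 1) 1 one_ne_zero
          (M2_mem a1 a2 b1 b2 c1 c2 hb1 hb2 hc1 v hv1 hv12 hv13 hv22 hv23)
          (M2_lc (a2 + b2 + 1)) (M2_bound (a2 + b2 + 1)) (Nat.zero_le m) hcase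
  refine main (toLex ((f.support.sup fun β => β 0) + 1, 0)) f hf ?_
  intro s t hst
  rw [Prod.Lex.toLex_lt_toLex]
  left
  simp only
  have : s ≤ f.support.sup fun β => β 0 := by
    have hmem : e s t ∈ f.support := MvPolynomial.mem_support_iff.mpr hst
    have := Finset.le_sup (f := fun β => β 0) hmem
    simpa using this
  omega

end Main

end Stmt12Aux

/-- Lemma 2.8(3): for `F = X_1^{a_1}X_2^{a_2}(c_1 X_1^{b_1} - c_2 X_2^{b_2})` with
`v_1 = v_2 = v`, `Ann_R(F) = (p, q)`. -/
theorem stmt12 (k : Type*) [Field k] (a1 a2 b1 b2 : ℕ) (hb1 : 1 ≤ b1) (hb2 : 1 ≤ b2)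
    (c1 c2 : k) (hc1 : c1 ≠ 0) (hc2 : c2 ≠ 0)
    (v : ℕ)
    (hv1 : 1 ≤ v) (hv12 : a1 + 1 ≤ v * b1) (hv13 : ∀ i, 1 ≤ i → a1 + 1 ≤ i * b1 → v ≤ i)
    (hv22 : a2 + 1 ≤ v * b2) (hv23 : ∀ i, 1 ≤ i → a2 + 1 ≤ i * b2 → v ≤ i) :
    annSet ((MvPolynomial.X 0 : MvPolynomial (Fin 2) k) ^ a1 * MvPolynomial.X 1 ^ a2 *
        (MvPolynomial.C c1 * MvPolynomial.X 0 ^ b1 - MvPolynomial.C c2 * MvPolynomial.X 1 ^ b2)) =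
      ((Ideal.span {pPoly k b1 b2 v c1 c2, qPoly k a1 a2 b1 b2 v c1 c2}) :
        Set (MvPolynomial (Fin 2) k)) := by
  ext f
  have hFF : Stmt12Aux.FF a1 a2 b1 b2 c1 c2
      = (MvPolynomial.X 0 : MvPolynomial (Fin 2) k) ^ a1 * MvPolynomial.X 1 ^ a2 *
        (MvPolynomial.C c1 * MvPolynomial.X 0 ^ b1 - MvPolynomial.C c2 * MvPolynomial.X 1 ^ b2) :=
    rfl
  simp only [annSet, Set.mem_setOf_eq, SetLike.mem_coe, ← hFF]
  constructor
  · intro hf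
    exact Stmt12Aux.ann_sub_span a1 a2 b1 b2 c1 c2 hb1 hb2 hc1 hc2 v hv1 hv12 hv13 hv22 hv23 f hf
  · intro hf
    exact Stmt12Aux.span_sub_ann a1 a2 b1 b2 c1 c2 hb1 hb2 hc1 hc2 v hv1 hv12 hv13 hv22 hv23 f hf
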